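/- Let A and B be positive self-adjoint operators on Hilbert spaces X and Y respectively, and T : X → Y a bounded operator with T(Dom A) ⊆ Dom B such that ‖T x‖ ≤ C₀ ‖x‖ for all x and ‖B T x‖ ≤ C₁ ‖A x‖ for all x ∈ Dom A. Then for every λ ∈ [0,1] and all x ∈ Dom(A^λ), ‖B^λ T x‖ ≤ C₀^{1−λ} C₁^{λ} ‖A^λ x‖ (Heinz–Kato inequality). -/

import Mathlib

open NormedSpace Complex
open scoped NNReal
open scoped InnerProductSpace

section aux
variable {H : Type*} [NormedAddCommGroup H] [InnerProductSpace ℂ H] [CompleteSpace H]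

lemma hk_star_exp_smul {L : H →L[ℂ] H} (hL : IsSelfAdjoint L) (z : ℂ) :
    star (NormedSpace.exp (z • L)) = NormedSpace.exp ((starRingEnd ℂ z) • L) := by
  rw [star_exp, star_smul, hL.star_eq]
  rfl

lemma hk_exp_smul_mul {L : H →L[ℂ] H} (z w : ℂ) :
    NormedSpace.exp (z • L) * NormedSpace.exp (w • L) = NormedSpace.exp ((z + w) • L) := by
  letI : NormedAlgebra ℚ (H →L[ℂ] H) := NormedAlgebra.restrictScalars ℚ ℂ _
  rw [← exp_add_of_commute (((Commute.refl L).smul_left z).smul_right w), add_smul]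

lemma hk_exp_isometry {L : H →L[ℂ] H} (hL : IsSelfAdjoint L) {z : ℂ} (hz : z.re = 0) (v : H) :
    ‖NormedSpace.exp (z • L) v‖ = ‖v‖ := by
  set U := NormedSpace.exp (z • L) with hU
  have hconj : starRingEnd ℂ z = -z := by
    apply Complex.ext <;> simp [hz]
  have hsU : star U * U = 1 := by
    rw [hU, hk_star_exp_smul hL, hconj, hk_exp_smul_mul, neg_add_cancel, zero_smul, NormedSpace.exp_zero]
  have h2 : ⟪U v, U v⟫_ℂ = ⟪v, v⟫_ℂ := by
    rw [← ContinuousLinearMap.adjoint_inner_left, ← ContinuousLinearMap.star_eq_adjoint]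
    have : star U (U v) = (star U * U) v := rfl
    rw [this, hsU]
    rfl
  rw [@norm_eq_sqrt_re_inner ℂ, @norm_eq_sqrt_re_inner ℂ _ _ _ _ v, h2]
variable {H : Type*} [NormedAddCommGroup H] [InnerProductSpace ℂ H] [CompleteSpace H]

-- real exp of smul as cfc
lemma hk_exp_real_smul_eq_cfc {L : H →L[ℂ] H} (hL : IsSelfAdjoint L) (s : ℝ) :
    NormedSpace.exp (s • L) = cfc (fun t : ℝ => Real.exp (s * t)) L := by
  have h1 : s • L = cfc (fun t : ℝ => s * t) L := (cfc_const_mul_id s L hL).symm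
  rw [h1, ← CFC.real_exp_eq_normedSpace_exp (cfc_predicate _ L),
    ← cfc_comp' Real.exp (fun t : ℝ => s * t) L Real.continuous_exp.continuousOn]

-- complex exp of real scalar equals real exp
lemma hk_exp_coe_smul (L : H →L[ℂ] H) (s : ℝ) :
    NormedSpace.exp ((s : ℂ) • L) = NormedSpace.exp (s • L) := by
  have : (s : ℂ) • L = s • L := by
    rw [← Complex.coe_algebraMap, algebraMap_smul]
  rw [this]

lemma hk_norm_exp_real_smul_le [Nontrivial H] {L : H →L[ℂ] H} (hL : IsSelfAdjoint L) (s : ℝ) :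
    ‖NormedSpace.exp (s • L)‖ ≤ Real.exp (|s| * ‖L‖) := by
  rw [hk_exp_real_smul_eq_cfc hL s]
  refine norm_cfc_le (Real.exp_nonneg _) fun t ht => ?_
  rw [Real.norm_eq_abs, abs_of_pos (Real.exp_pos _), Real.exp_le_exp]
  calc s * t ≤ |s * t| := le_abs_self _
  _ = |s| * |t| := abs_mul s t
  _ ≤ |s| * ‖L‖ := by
      refine mul_le_mul_of_nonneg_left ?_ (abs_nonneg s)
      simpa using spectrum.norm_le_norm_of_mem (𝕜 := ℝ) ht

lemma hk_exp_apply_split {L : H →L[ℂ] H} (z : ℂ) (v : H) :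
    NormedSpace.exp (z • L) v = NormedSpace.exp ((z - z.re) • L) (NormedSpace.exp ((z.re : ℂ) • L) v) := by
  have h : NormedSpace.exp (z • L) = NormedSpace.exp ((z - z.re) • L) * NormedSpace.exp ((z.re : ℂ) • L) := by
    rw [hk_exp_smul_mul, sub_add_cancel]
  rw [h]; rfl

lemma hk_norm_exp_apply_le [Nontrivial H] {L : H →L[ℂ] H} (hL : IsSelfAdjoint L) (z : ℂ) (v : H) :
    ‖NormedSpace.exp (z • L) v‖ ≤ Real.exp (|z.re| * ‖L‖) * ‖v‖ := by
  rw [hk_exp_apply_split z v, hk_exp_isometry hL (by simp) _, hk_exp_coe_smul]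
  calc ‖NormedSpace.exp (z.re • L) v‖ ≤ ‖NormedSpace.exp (z.re • L)‖ * ‖v‖ := (NormedSpace.exp (z.re • L)).le_opNorm v
  _ ≤ Real.exp (|z.re| * ‖L‖) * ‖v‖ :=
      mul_le_mul_of_nonneg_right (hk_norm_exp_real_smul_le hL _) (norm_nonneg v)


lemma hk_exp_smul_log {a : H →L[ℂ] H} (ha : IsSelfAdjoint a)
    (hspec : ∀ t ∈ spectrum ℝ a, 0 < t) (lam : ℝ) :
    NormedSpace.exp (lam • CFC.log a) = cfc (fun t : ℝ => t ^ lam) a := by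
  have hlog : ContinuousOn Real.log (spectrum ℝ a) :=
    Real.continuousOn_log.mono fun t ht => by
      simpa using ne_of_gt (hspec t ht)
  have h1 : lam • CFC.log a = cfc (fun t : ℝ => lam * Real.log t) a := by
    rw [CFC.log, ← cfc_const_mul lam Real.log a hlog]
  rw [h1, ← CFC.real_exp_eq_normedSpace_exp (cfc_predicate _ a),
    ← cfc_comp' Real.exp (fun t : ℝ => lam * Real.log t) a Real.continuous_exp.continuousOn
      (continuousOn_const.mul hlog)]
  exact cfc_congr fun t ht => by
    rw [Real.rpow_def_of_pos (hspec t ht), mul_comm]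

lemma hk_isPositive {A : H →L[ℂ] H} (hsa : IsSelfAdjoint A)
    (hpos : ∀ x, 0 ≤ (⟪x, A x⟫_ℂ).re) : (0 : H →L[ℂ] H) ≤ A := by
  rw [ContinuousLinearMap.nonneg_iff_isPositive]
  exact ⟨hsa.isSymmetric, fun x => by simpa [ContinuousLinearMap.reApplyInnerSelf, inner_re_symm] using hpos x⟩

lemma hk_norm_sq_shift {A : H →L[ℂ] H}
    (hpos : ∀ x, 0 ≤ (⟪x, A x⟫_ℂ).re) {δ : ℝ} (hδ : 0 ≤ δ) (v : H) :
    ‖A v‖ ≤ ‖A v + δ • v‖ ∧ δ * ‖v‖ ≤ ‖A v + δ • v‖ := by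
  have hsq : ‖A v + δ • v‖ ^ 2 =
      ‖A v‖ ^ 2 + 2 * (δ * (⟪v, A v⟫_ℂ).re) + (δ * ‖v‖) ^ 2 := by
    have hc : (δ : ℝ) • v = (δ : ℂ) • v := by
      rw [← Complex.coe_algebraMap, algebraMap_smul]
    rw [← @inner_self_eq_norm_sq ℂ, hc, inner_add_add_self]
    have h1 : ⟪A v, (δ:ℂ) • v⟫_ℂ = (δ:ℂ) * ⟪A v, v⟫_ℂ := inner_smul_right _ _ _
    have h2 : ⟪(δ:ℂ) • v, A v⟫_ℂ = (starRingEnd ℂ (δ:ℂ)) * ⟪v, A v⟫_ℂ := inner_smul_left _ _ _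
    have h3 : ⟪(δ:ℂ) • v, (δ:ℂ) • v⟫_ℂ = (starRingEnd ℂ (δ:ℂ)) * ((δ:ℂ) * ⟪v, v⟫_ℂ) := by
      rw [inner_smul_left, inner_smul_right]
    rw [h1, h2, h3]
    simp only [RCLike.re_to_complex, Complex.add_re, Complex.mul_re, Complex.conj_re, Complex.conj_im,
      Complex.ofReal_re, Complex.ofReal_im]
    have hAv : (⟪A v, A v⟫_ℂ).re = ‖A v‖ ^ 2 := by
      simpa using @inner_self_eq_norm_sq ℂ _ _ _ _ (A v)
    have hv' : (⟪v, v⟫_ℂ).re = ‖v‖ ^ 2 := by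
      simpa using @inner_self_eq_norm_sq ℂ _ _ _ _ v
    have hrr : (⟪A v, v⟫_ℂ).re = (⟪v, A v⟫_ℂ).re := by simpa using inner_re_symm (𝕜 := ℂ) (A v) v
    linear_combination hAv + δ * hrr + δ ^ 2 * hv'
  constructor
  · have h2 : ‖A v‖ ^ 2 ≤ ‖A v + δ • v‖ ^ 2 := by
      rw [hsq]
      nlinarith [hpos v, mul_nonneg hδ (hpos v), sq_nonneg (δ * ‖v‖)]
    exact (pow_le_pow_iff_left₀ (norm_nonneg _) (norm_nonneg _) two_ne_zero).mp h2
  · have h2 : (δ * ‖v‖) ^ 2 ≤ ‖A v + δ • v‖ ^ 2 := by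
      rw [hsq]
      nlinarith [hpos v, mul_nonneg hδ (hpos v), sq_nonneg ‖A v‖]
    exact (pow_le_pow_iff_left₀ (mul_nonneg hδ (norm_nonneg _)) (norm_nonneg _) two_ne_zero).mp h2


end aux

section key
open Complex.HadamardThreeLines

variable {X Y : Type*} [NormedAddCommGroup X] [InnerProductSpace ℂ X] [CompleteSpace X]
  [NormedAddCommGroup Y] [InnerProductSpace ℂ Y] [CompleteSpace Y]

set_option maxHeartbeats 1000000 in
lemma hk_key [Nontrivial X] [Nontrivial Y]
    (a : X →L[ℂ] X) (b : Y →L[ℂ] Y) (T : X →L[ℂ] Y) (C₀ C₁ : ℝ)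
    (hC₀ : 0 ≤ C₀) (hC₁ : 0 ≤ C₁)
    (ha_sa : IsSelfAdjoint a) (hb_sa : IsSelfAdjoint b)
    (ha_spec : ∀ t ∈ spectrum ℝ a, 0 < t) (hb_spec : ∀ t ∈ spectrum ℝ b, 0 < t)
    (hT : ∀ v, ‖T v‖ ≤ C₀ * ‖v‖) (hbT : ∀ v, ‖b (T v)‖ ≤ C₁ * ‖a v‖)
    {lam : ℝ} (hlam : lam ∈ Set.Icc (0:ℝ) 1) (x : X) :
    ‖cfc (fun t : ℝ => t ^ lam) b (T x)‖ ≤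
      C₀ ^ (1 - lam) * C₁ ^ lam * ‖cfc (fun t : ℝ => t ^ lam) a x‖ := by
  set La := CFC.log a with hLa_def
  set Lb := CFC.log b with hLb_def
  have hLa : IsSelfAdjoint La := cfc_predicate _ a
  have hLb : IsSelfAdjoint Lb := cfc_predicate _ b
  set u : X := NormedSpace.exp (lam • La) x with hu_def
  set y : Y := cfc (fun t : ℝ => t ^ lam) b (T x) with hy_def
  set F : ℂ → ℂ := fun z => innerSL ℂ y (NormedSpace.exp (z • Lb) (T (NormedSpace.exp ((-z) • La) u))) with hF_def
  -- differentiability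
  have hdLb : Differentiable ℂ (fun z : ℂ => NormedSpace.exp (z • Lb)) :=
    fun z => (hasFDerivAt_exp_smul_const ℂ Lb z).differentiableAt
  have hdLa : Differentiable ℂ (fun z : ℂ => NormedSpace.exp ((-z) • La)) := fun z =>
    ((hasFDerivAt_exp_smul_const ℂ La (-z)).differentiableAt.comp z
      differentiable_neg.differentiableAt :)
  have hg : Differentiable ℂ (fun z : ℂ => NormedSpace.exp (z • Lb) (T (NormedSpace.exp ((-z) • La) u))) := by
    have h1 : Differentiable ℂ (fun z : ℂ => NormedSpace.exp ((-z) • La) u) :=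
      hdLa.clm_apply (differentiable_const u)
    have h2 : Differentiable ℂ (fun z : ℂ => T (NormedSpace.exp ((-z) • La) u)) :=
      T.differentiable.comp h1
    exact hdLb.clm_apply h2
  have hF : Differentiable ℂ F := (innerSL ℂ y).differentiable.comp hg
  -- generic bound for F
  have hFbound : ∀ z : ℂ, ‖F z‖ ≤
      ‖y‖ * (Real.exp (|z.re| * ‖Lb‖) * (‖T‖ * (Real.exp (|z.re| * ‖La‖) * ‖u‖))) := by
    intro z
    have h0 : ‖F z‖ ≤ ‖y‖ * ‖NormedSpace.exp (z • Lb) (T (NormedSpace.exp ((-z) • La) u))‖ := by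
      simpa [hF_def] using norm_inner_le_norm (𝕜 := ℂ) y _
    refine h0.trans ?_
    refine mul_le_mul_of_nonneg_left ?_ (norm_nonneg y)
    refine (hk_norm_exp_apply_le hLb z _).trans ?_
    refine mul_le_mul_of_nonneg_left ?_ (Real.exp_nonneg _)
    refine (T.le_opNorm _).trans ?_
    refine mul_le_mul_of_nonneg_left ?_ (norm_nonneg T)
    simpa [neg_re, abs_neg] using hk_norm_exp_apply_le hLa (-z) u
  -- boundedness on the strip
  have hBdd : BddAbove ((norm ∘ F) '' verticalClosedStrip 0 1) := by
    refine ⟨‖y‖ * (Real.exp ‖Lb‖ * (‖T‖ * (Real.exp ‖La‖ * ‖u‖))), ?_⟩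
    rintro - ⟨z, hz, rfl⟩
    refine (hFbound z).trans ?_
    have hre : |z.re| ≤ 1 := by
      rcases hz with ⟨h1, h2⟩
      rw [abs_le]; constructor <;> linarith
    have he1 : Real.exp (|z.re| * ‖Lb‖) ≤ Real.exp ‖Lb‖ := by
      rw [Real.exp_le_exp]; nlinarith [norm_nonneg Lb, abs_nonneg z.re]
    have he2 : Real.exp (|z.re| * ‖La‖) ≤ Real.exp ‖La‖ := by
      rw [Real.exp_le_exp]; nlinarith [norm_nonneg La, abs_nonneg z.re]
    gcongr
  -- continuity facts on spectra
  have hlog_a : ContinuousOn Real.log (spectrum ℝ a) :=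
    Real.continuousOn_log.mono fun t ht => by simpa using ne_of_gt (ha_spec t ht)
  -- commutation of a with La
  have hcomm : Commute a La := by
    have h1 : cfc (fun t : ℝ => t * Real.log t) a = a * La := by
      rw [cfc_mul (fun t : ℝ => t) Real.log a continuousOn_id hlog_a, cfc_id' ℝ a, hLa_def,
        CFC.log]
    have h2 : cfc (fun t : ℝ => Real.log t * t) a = La * a := by
      rw [cfc_mul Real.log (fun t : ℝ => t) a hlog_a continuousOn_id, cfc_id' ℝ a, hLa_def,
        CFC.log]
    have h3 : cfc (fun t : ℝ => t * Real.log t) a = cfc (fun t : ℝ => Real.log t * t) a :=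
      cfc_congr fun t _ => mul_comm _ _
    exact h1.symm.trans (h3.trans h2)
  -- a and b as complex exponentials
  have ha_exp : NormedSpace.exp ((1 : ℂ) • La) = a := by
    have : ((1 : ℝ) : ℂ) = (1 : ℂ) := by norm_num
    rw [← this, hk_exp_coe_smul, one_smul, CFC.exp_log a ((StarOrderedRing.isStrictlyPositive_iff_spectrum_pos (R := ℝ) a ha_sa).mpr ha_spec)]
  have hb_exp : NormedSpace.exp ((1 : ℂ) • Lb) = b := by
    have : ((1 : ℝ) : ℂ) = (1 : ℂ) := by norm_num
    rw [← this, hk_exp_coe_smul, one_smul, CFC.exp_log b ((StarOrderedRing.isStrictlyPositive_iff_spectrum_pos (R := ℝ) b hb_sa).mpr hb_spec)]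
  -- edge at re = 0
  have hedge0 : ∀ z ∈ Complex.re ⁻¹' {0}, ‖F z‖ ≤ C₀ * (‖u‖ * ‖y‖) := by
    intro z hz
    have hz0 : z.re = 0 := hz
    have h0 : ‖F z‖ ≤ ‖y‖ * ‖NormedSpace.exp (z • Lb) (T (NormedSpace.exp ((-z) • La) u))‖ := by
      simpa [hF_def] using norm_inner_le_norm (𝕜 := ℂ) y _
    rw [hk_exp_isometry hLb hz0] at h0
    refine h0.trans ?_
    calc ‖y‖ * ‖T (NormedSpace.exp ((-z) • La) u)‖ ≤ ‖y‖ * (C₀ * ‖NormedSpace.exp ((-z) • La) u‖) :=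
          mul_le_mul_of_nonneg_left (hT _) (norm_nonneg y)
    _ = C₀ * (‖u‖ * ‖y‖) := by
          rw [hk_exp_isometry hLa (by simp [hz0])]; ring
  -- edge at re = 1
  have hedge1 : ∀ z ∈ Complex.re ⁻¹' {1}, ‖F z‖ ≤ C₁ * (‖u‖ * ‖y‖) := by
    intro z hz
    have hz' : z.re = 1 := hz
    have hz1 : (z - 1).re = 0 := by rw [Complex.sub_re, hz', Complex.one_re]; ring
    set w : X := NormedSpace.exp ((-z) • La) u with hw_def
    have hsplit : NormedSpace.exp (z • Lb) (T w) = NormedSpace.exp ((z - 1) • Lb) (b (T w)) := by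
      have : NormedSpace.exp (z • Lb) = NormedSpace.exp ((z - 1) • Lb) * NormedSpace.exp ((1 : ℂ) • Lb) := by
        rw [hk_exp_smul_mul, sub_add_cancel]
      rw [this, hb_exp]; rfl
    have haw : a w = NormedSpace.exp ((-(z - 1)) • La) u := by
      have hw2 : w = NormedSpace.exp ((-(z - 1)) • La) (NormedSpace.exp ((-1 : ℂ) • La) u) := by
        have : NormedSpace.exp ((-(z - 1)) • La) * NormedSpace.exp ((-1 : ℂ) • La) = NormedSpace.exp ((-z) • La) := by
          rw [hk_exp_smul_mul]; ring_nf
        rw [hw_def, ← this]; rfl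
      have hcz : Commute a ((-(z - 1)) • La) := (hcomm.smul_right _)
      have hce : Commute a (NormedSpace.exp ((-(z - 1)) • La)) := hcz.exp_right
      have : a (NormedSpace.exp ((-(z - 1)) • La) (NormedSpace.exp ((-1 : ℂ) • La) u)) =
          NormedSpace.exp ((-(z - 1)) • La) (a (NormedSpace.exp ((-1 : ℂ) • La) u)) := by
        have := congrArg (fun (S : X →L[ℂ] X) => S (NormedSpace.exp ((-1 : ℂ) • La) u)) hce.eq
        simpa using this
      rw [hw2, this]
      congr 1
      have : a (NormedSpace.exp ((-1 : ℂ) • La) u) = (NormedSpace.exp ((1 : ℂ) • La) * NormedSpace.exp ((-1 : ℂ) • La)) u := by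
        rw [ha_exp]; rfl
      rw [this, hk_exp_smul_mul]
      norm_num [NormedSpace.exp_zero]
    have h0 : ‖F z‖ ≤ ‖y‖ * ‖NormedSpace.exp (z • Lb) (T w)‖ := by
      simpa [hF_def, hw_def] using norm_inner_le_norm (𝕜 := ℂ) y _
    rw [hsplit, hk_exp_isometry hLb hz1] at h0
    refine h0.trans ?_
    calc ‖y‖ * ‖b (T w)‖ ≤ ‖y‖ * (C₁ * ‖a w‖) :=
          mul_le_mul_of_nonneg_left (hbT _) (norm_nonneg y)
    _ = C₁ * (‖u‖ * ‖y‖) := by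
          rw [haw, hk_exp_isometry hLa
            (by rw [Complex.neg_re, Complex.sub_re, hz', Complex.one_re]; ring)]; ring
  -- apply Hadamard three lines at z = lam
  have hmem : (lam : ℂ) ∈ verticalClosedStrip 0 1 := by
    simpa [verticalClosedStrip] using hlam
  have hmain := norm_le_interp_of_mem_verticalClosedStrip' (f := F) zero_lt_one hmem
    (hF.diffContOnCl) hBdd hedge0 hedge1
  rw [Complex.ofReal_re] at hmain
  simp only [sub_zero, div_one] at hmain
  -- compute F lam
  have hulam : NormedSpace.exp ((-(lam : ℂ)) • La) u = x := by
    have : NormedSpace.exp ((-(lam : ℂ)) • La) * NormedSpace.exp ((lam : ℂ) • La) = 1 := by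
      rw [hk_exp_smul_mul]; norm_num [NormedSpace.exp_zero]
    have hu2 : u = NormedSpace.exp ((lam : ℂ) • La) x := by rw [hu_def, hk_exp_coe_smul]
    rw [hu2]
    have := congrArg (fun (S : X →L[ℂ] X) => S x) this
    simpa using this
  have hblam : NormedSpace.exp ((lam : ℂ) • Lb) = cfc (fun t : ℝ => t ^ lam) b := by
    rw [hk_exp_coe_smul, hk_exp_smul_log hb_sa hb_spec]
  have hFlam : F (lam : ℂ) = inner ℂ y y := by
    rw [hF_def]
    simp only
    rw [hulam, hblam]
    rfl
  have hFlam_norm : ‖F (lam : ℂ)‖ = ‖y‖ ^ 2 := by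
    rw [hFlam, @inner_self_eq_norm_sq_to_K ℂ]
    simp [Real.sqrt_sq (norm_nonneg y)]
  have hunorm : ‖u‖ = ‖cfc (fun t : ℝ => t ^ lam) a x‖ := by
    rw [hu_def, hk_exp_smul_log ha_sa ha_spec]
  -- final computation
  have hs : (0 : ℝ) ≤ ‖u‖ * ‖y‖ := mul_nonneg (norm_nonneg u) (norm_nonneg y)
  have hrw : (C₀ * (‖u‖ * ‖y‖)) ^ (1 - lam) * (C₁ * (‖u‖ * ‖y‖)) ^ lam =
      C₀ ^ (1 - lam) * C₁ ^ lam * (‖u‖ * ‖y‖) := by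
    have h4 : (‖u‖ * ‖y‖) ^ (1 - lam) * (‖u‖ * ‖y‖) ^ lam = ‖u‖ * ‖y‖ := by
      rw [← Real.rpow_add' hs (by norm_num), sub_add_cancel, Real.rpow_one]
    rw [Real.mul_rpow hC₀ hs, Real.mul_rpow hC₁ hs]
    calc C₀ ^ (1 - lam) * (‖u‖ * ‖y‖) ^ (1 - lam) * (C₁ ^ lam * (‖u‖ * ‖y‖) ^ lam)
        = C₀ ^ (1 - lam) * C₁ ^ lam * ((‖u‖ * ‖y‖) ^ (1 - lam) * (‖u‖ * ‖y‖) ^ lam) := by ring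
      _ = C₀ ^ (1 - lam) * C₁ ^ lam * (‖u‖ * ‖y‖) := by rw [h4]
  rw [hFlam_norm, hrw] at hmain
  rcases eq_or_lt_of_le (norm_nonneg y) with hy0 | hy0
  · rw [hy_def] at hy0
    rw [← hy0]
    positivity
  · have : ‖y‖ * ‖y‖ ≤ (C₀ ^ (1 - lam) * C₁ ^ lam * ‖u‖) * ‖y‖ := by
      nlinarith [hmain]
    have h2 := le_of_mul_le_mul_right this hy0
    rw [hunorm] at h2
    calc ‖y‖ ≤ C₀ ^ (1 - lam) * C₁ ^ lam * ‖cfc (fun t : ℝ => t ^ lam) a x‖ := h2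

end key

section pert
variable {H : Type*} [NormedAddCommGroup H] [InnerProductSpace ℂ H] [CompleteSpace H]

lemma hk_rpow_add_le {t ε lam : ℝ} (ht : 0 ≤ t) (hε : 0 ≤ ε) (h0 : 0 ≤ lam) (h1 : lam ≤ 1) :
    (t + ε) ^ lam ≤ t ^ lam + ε ^ lam := by
  have key := NNReal.rpow_add_le_add_rpow t.toNNReal ε.toNNReal h0 h1
  have h2 : ((t.toNNReal + ε.toNNReal : ℝ≥0) : ℝ) = t + ε := by
    simp [Real.coe_toNNReal t ht, Real.coe_toNNReal ε hε]
  have h3 := NNReal.coe_le_coe.mpr key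
  rw [NNReal.coe_rpow, h2] at h3
  simpa [NNReal.coe_rpow, Real.coe_toNNReal t ht, Real.coe_toNNReal ε hε] using h3

lemma hk_cfc_shift {B : H →L[ℂ] H} (hB : IsSelfAdjoint B) {ε lam : ℝ} (hlam : 0 ≤ lam) :
    cfc (fun t : ℝ => t ^ lam) (algebraMap ℝ (H →L[ℂ] H) ε + B) =
      cfc (fun t : ℝ => (t + ε) ^ lam) B := by
  have hcont : Continuous (fun t : ℝ => t ^ lam) :=
    continuous_iff_continuousAt.mpr fun t => Real.continuousAt_rpow_const t lam (Or.inr hlam)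
  have hB' : IsSelfAdjoint (algebraMap ℝ (H →L[ℂ] H) ε + B) :=
    ((IsSelfAdjoint.all ε).algebraMap _).add hB
  have h1 : cfc (fun t : ℝ => t + ε) B = algebraMap ℝ (H →L[ℂ] H) ε + B := by
    rw [cfc_add B (fun t : ℝ => t) (fun _ : ℝ => ε) continuousOn_id continuousOn_const,
      cfc_id' ℝ B, cfc_const ε B, add_comm]
  rw [← h1, ← cfc_comp' (fun t : ℝ => t ^ lam) (fun t : ℝ => t + ε) B hcont.continuousOn
    ((continuous_id.add continuous_const).continuousOn)]

lemma hk_cfc_pert {B : H →L[ℂ] H} (hB : IsSelfAdjoint B)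
    (hBpos : ∀ v, 0 ≤ (⟪v, B v⟫_ℂ).re) {ε lam : ℝ} (hε : 0 ≤ ε) (hl0 : 0 ≤ lam) (hl1 : lam ≤ 1) :
    ‖cfc (fun t : ℝ => t ^ lam) (algebraMap ℝ (H →L[ℂ] H) ε + B) -
      cfc (fun t : ℝ => t ^ lam) B‖ ≤ ε ^ lam := by
  have hcont : Continuous (fun t : ℝ => t ^ lam) :=
    continuous_iff_continuousAt.mpr fun t => Real.continuousAt_rpow_const t lam (Or.inr hl0)
  have hcont2 : Continuous (fun t : ℝ => (t + ε) ^ lam) :=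
    hcont.comp (continuous_id.add continuous_const)
  rw [hk_cfc_shift hB hl0,
    ← cfc_sub (fun t : ℝ => (t + ε) ^ lam) (fun t : ℝ => t ^ lam) B
      hcont2.continuousOn hcont.continuousOn]
  refine norm_cfc_le (Real.rpow_nonneg hε _) fun t ht => ?_
  have ht0 : 0 ≤ t := spectrum_nonneg_of_nonneg (hk_isPositive hB hBpos) ht
  rw [Real.norm_eq_abs,
    _root_.abs_of_nonneg (sub_nonneg.mpr (Real.rpow_le_rpow ht0 (by linarith) hl0))]
  have := hk_rpow_add_le ht0 hε hl0 hl1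
  linarith

end pert

open Filter Topology in
/-- STATEMENT 3 (Heinz–Kato inequality), with the fractional powers `A^λ`, `B^λ`
defined via the continuous functional calculus. -/
theorem stmt_3
    {X Y : Type*} [NormedAddCommGroup X] [InnerProductSpace ℂ X] [CompleteSpace X]
    [NormedAddCommGroup Y] [InnerProductSpace ℂ Y] [CompleteSpace Y]
    (A : X →L[ℂ] X) (B : Y →L[ℂ] Y) (T : X →L[ℂ] Y) (C₀ C₁ : ℝ)
    (hC₀ : 0 ≤ C₀) (hC₁ : 0 ≤ C₁)
    (hA_sa : IsSelfAdjoint A) (hA_pos : ∀ x, 0 ≤ (⟪x, A x⟫_ℂ).re)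
    (hB_sa : IsSelfAdjoint B) (hB_pos : ∀ y, 0 ≤ (⟪y, B y⟫_ℂ).re)
    (hT : ∀ x, ‖T x‖ ≤ C₀ * ‖x‖)
    (hBT : ∀ x, ‖B (T x)‖ ≤ C₁ * ‖A x‖) :
    ∀ lam : ℝ, lam ∈ Set.Icc (0 : ℝ) 1 → ∀ x : X,
      ‖(cfc (fun t : ℝ => t ^ lam) B) (T x)‖ ≤
        C₀ ^ (1 - lam) * C₁ ^ lam * ‖(cfc (fun t : ℝ => t ^ lam) A) x‖ := by
  intro lam hlam x
  rcases eq_or_lt_of_le hlam.1 with hlam0 | hlam0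
  · -- case lam = 0
    have h1 : cfc (fun t : ℝ => t ^ lam) B = 1 := by
      rw [← hlam0]
      calc cfc (fun t : ℝ => t ^ (0 : ℝ)) B = cfc (fun _ : ℝ => (1 : ℝ)) B :=
            cfc_congr fun t _ => Real.rpow_zero t
      _ = 1 := by rw [cfc_const 1 B hB_sa, map_one]
    have h2 : cfc (fun t : ℝ => t ^ lam) A = 1 := by
      rw [← hlam0]
      calc cfc (fun t : ℝ => t ^ (0 : ℝ)) A = cfc (fun _ : ℝ => (1 : ℝ)) A :=
            cfc_congr fun t _ => Real.rpow_zero t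
      _ = 1 := by rw [cfc_const 1 A hA_sa, map_one]
    rw [h1, h2]
    simp only [ContinuousLinearMap.one_apply]
    rw [← hlam0, sub_zero, Real.rpow_one, Real.rpow_zero, mul_one]
    exact hT x
  -- case 0 < lam
  rcases subsingleton_or_nontrivial X with hX | hX
  · have hx : x = 0 := Subsingleton.elim x 0
    rw [hx, map_zero, map_zero, norm_zero]
    positivity
  rcases subsingleton_or_nontrivial Y with hY | hY
  · have h0 : cfc (fun t : ℝ => t ^ lam) B (T x) = 0 := Subsingleton.elim _ _
    rw [h0, norm_zero]
    positivity
  set NB := ‖cfc (fun t : ℝ => t ^ lam) B (T x)‖ with hNB_def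
  set NA := ‖cfc (fun t : ℝ => t ^ lam) A x‖ with hNA_def
  have key : ∀ ε : ℝ, ε ∈ Set.Ioi (0 : ℝ) → NB ≤ ε ^ lam * ‖T x‖ +
      C₀ ^ (1 - lam) * (C₁ + Real.sqrt ε * C₀) ^ lam * (NA + Real.sqrt ε ^ lam * ‖x‖) := by
    intro ε hε
    rw [Set.mem_Ioi] at hε
    set δ := Real.sqrt ε with hδ_def
    have hδ : 0 < δ := Real.sqrt_pos.mpr hε
    have hδε : δ * δ = ε := Real.mul_self_sqrt hε.le
    set aop := algebraMap ℝ (X →L[ℂ] X) δ + A with haop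
    set bop := algebraMap ℝ (Y →L[ℂ] Y) ε + B with hbop
    have ha_sa' : IsSelfAdjoint aop := ((IsSelfAdjoint.all δ).algebraMap _).add hA_sa
    have hb_sa' : IsSelfAdjoint bop := ((IsSelfAdjoint.all ε).algebraMap _).add hB_sa
    have hApos : (0 : X →L[ℂ] X) ≤ A := hk_isPositive hA_sa hA_pos
    have hBpos : (0 : Y →L[ℂ] Y) ≤ B := hk_isPositive hB_sa hB_pos
    have ha_spec : ∀ t ∈ spectrum ℝ aop, 0 < t := by
      intro t ht
      rw [haop, ← spectrum.singleton_add_eq] at ht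
      obtain ⟨u1, hu1, v1, hv1, rfl⟩ := Set.mem_add.mp ht
      have h5 := spectrum_nonneg_of_nonneg hApos hv1
      rw [Set.mem_singleton_iff] at hu1
      rw [hu1]
      linarith
    have hb_spec : ∀ t ∈ spectrum ℝ bop, 0 < t := by
      intro t ht
      rw [hbop, ← spectrum.singleton_add_eq] at ht
      obtain ⟨u1, hu1, v1, hv1, rfl⟩ := Set.mem_add.mp ht
      have h5 := spectrum_nonneg_of_nonneg hBpos hv1
      rw [Set.mem_singleton_iff] at hu1
      rw [hu1]
      linarith
    have happly : ∀ v : X, aop v = A v + δ • v := fun v => by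
      rw [haop]
      simp [Algebra.algebraMap_eq_smul_one, add_comm]
    have hbapply : ∀ w : Y, bop w = B w + ε • w := fun w => by
      rw [hbop]
      simp [Algebra.algebraMap_eq_smul_one, add_comm]
    have hbT' : ∀ v, ‖bop (T v)‖ ≤ (C₁ + δ * C₀) * ‖aop v‖ := by
      intro v
      have h1 := hk_norm_sq_shift hA_pos hδ.le v
      rw [hbapply]
      calc ‖B (T v) + ε • T v‖ ≤ ‖B (T v)‖ + ‖ε • T v‖ := norm_add_le _ _
      _ ≤ C₁ * ‖A v‖ + ε * ‖T v‖ := by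
            rw [norm_smul, Real.norm_eq_abs, abs_of_pos hε]
            exact add_le_add (hBT v) le_rfl
      _ ≤ C₁ * ‖A v‖ + ε * (C₀ * ‖v‖) :=
            add_le_add le_rfl (mul_le_mul_of_nonneg_left (hT v) hε.le)
      _ = C₁ * ‖A v‖ + (δ * C₀) * (δ * ‖v‖) := by rw [← hδε]; ring
      _ ≤ C₁ * ‖A v + δ • v‖ + (δ * C₀) * ‖A v + δ • v‖ :=
            add_le_add (mul_le_mul_of_nonneg_left h1.1 hC₁)
              (mul_le_mul_of_nonneg_left h1.2 (mul_nonneg hδ.le hC₀))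
      _ = (C₁ + δ * C₀) * ‖aop v‖ := by rw [happly v]; ring
    have key0 := hk_key aop bop T C₀ (C₁ + δ * C₀) hC₀ (by positivity) ha_sa' hb_sa'
      ha_spec hb_spec hT hbT' hlam x
    have hpb := hk_cfc_pert hB_sa hB_pos hε.le hlam.1 hlam.2 (lam := lam)
    have hpa := hk_cfc_pert hA_sa hA_pos hδ.le hlam.1 hlam.2 (lam := lam)
    have hNB1 : NB ≤ ‖cfc (fun t : ℝ => t ^ lam) bop (T x)‖ + ε ^ lam * ‖T x‖ := by
      have heq : cfc (fun t : ℝ => t ^ lam) B (T x) =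
          cfc (fun t : ℝ => t ^ lam) bop (T x) -
          (cfc (fun t : ℝ => t ^ lam) bop - cfc (fun t : ℝ => t ^ lam) B) (T x) := by
        simp [ContinuousLinearMap.sub_apply]
      rw [hNB_def, heq]
      refine (norm_sub_le _ _).trans (add_le_add le_rfl ?_)
      refine (ContinuousLinearMap.le_opNorm _ _).trans ?_
      exact mul_le_mul_of_nonneg_right hpb (norm_nonneg _)
    have hNA1 : ‖cfc (fun t : ℝ => t ^ lam) aop x‖ ≤ NA + δ ^ lam * ‖x‖ := by
      have heq : cfc (fun t : ℝ => t ^ lam) aop x =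
          cfc (fun t : ℝ => t ^ lam) A x +
          (cfc (fun t : ℝ => t ^ lam) aop - cfc (fun t : ℝ => t ^ lam) A) x := by
        simp [ContinuousLinearMap.sub_apply]
      rw [heq]
      refine (norm_add_le _ _).trans (add_le_add le_rfl ?_)
      refine (ContinuousLinearMap.le_opNorm _ _).trans ?_
      exact mul_le_mul_of_nonneg_right hpa (norm_nonneg _)
    calc NB ≤ ‖cfc (fun t : ℝ => t ^ lam) bop (T x)‖ + ε ^ lam * ‖T x‖ := hNB1
    _ ≤ C₀ ^ (1 - lam) * (C₁ + δ * C₀) ^ lam * ‖cfc (fun t : ℝ => t ^ lam) aop x‖ +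
        ε ^ lam * ‖T x‖ := add_le_add key0 le_rfl
    _ ≤ C₀ ^ (1 - lam) * (C₁ + δ * C₀) ^ lam * (NA + δ ^ lam * ‖x‖) + ε ^ lam * ‖T x‖ := by
        refine add_le_add (mul_le_mul_of_nonneg_left hNA1 ?_) le_rfl
        positivity
    _ = ε ^ lam * ‖T x‖ +
        C₀ ^ (1 - lam) * (C₁ + δ * C₀) ^ lam * (NA + δ ^ lam * ‖x‖) := by ring
  -- pass to the limit ε → 0⁺
  have hc0 : ContinuousAt (fun s : ℝ => s ^ lam) 0 :=
    Real.continuousAt_rpow_const 0 lam (Or.inr hlam.1)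
  have h1 : Tendsto (fun ε : ℝ => ε ^ lam) (𝓝[>] (0 : ℝ)) (𝓝 0) := by
    have h := hc0.tendsto
    rw [Real.zero_rpow hlam0.ne'] at h
    exact h.mono_left nhdsWithin_le_nhds
  have h2 : Tendsto (fun ε : ℝ => Real.sqrt ε) (𝓝[>] (0 : ℝ)) (𝓝 0) := by
    have h := (Real.continuous_sqrt.continuousAt (x := 0)).tendsto
    rw [Real.sqrt_zero] at h
    exact h.mono_left nhdsWithin_le_nhds
  have h3 : Tendsto (fun ε : ℝ => Real.sqrt ε ^ lam) (𝓝[>] (0 : ℝ)) (𝓝 0) := by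
    have h := hc0.tendsto.comp h2
    rw [Real.zero_rpow hlam0.ne'] at h
    exact h
  have h4 : Tendsto (fun ε : ℝ => (C₁ + Real.sqrt ε * C₀) ^ lam) (𝓝[>] (0 : ℝ))
      (𝓝 (C₁ ^ lam)) := by
    have hct : ContinuousAt (fun s : ℝ => s ^ lam) C₁ :=
      Real.continuousAt_rpow_const C₁ lam (Or.inr hlam.1)
    have hbase : Tendsto (fun ε : ℝ => C₁ + Real.sqrt ε * C₀) (𝓝[>] (0 : ℝ)) (𝓝 C₁) := by
      have h := (h2.mul_const C₀).const_add C₁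
      simpa using h
    exact hct.tendsto.comp hbase
  have hlim := (h1.mul_const ‖T x‖).add
    ((h4.const_mul (C₀ ^ (1 - lam))).mul ((h3.mul_const ‖x‖).const_add NA))
  have hlim' : Tendsto (fun ε : ℝ => ε ^ lam * ‖T x‖ +
      C₀ ^ (1 - lam) * (C₁ + Real.sqrt ε * C₀) ^ lam * (NA + Real.sqrt ε ^ lam * ‖x‖))
      (𝓝[>] (0 : ℝ)) (𝓝 (C₀ ^ (1 - lam) * C₁ ^ lam * NA)) := by
    convert hlim using 2
    ring
  exact ge_of_tendsto hlim' (eventually_nhdsWithin_of_forall key)
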